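/- Let (Ω, F, P) be a probability space with a filtration F_1 ⊆ F_2 ⊆ … ⊆ F_n, and for each j ∈ {1, …, n} let x_j : Ω → [0, 1] be F_j-measurable. Suppose that for every j ∈ {1, …, n}, almost surely x_j + E[Σ_{k > j} x_k | F_j] ≤ 1. Let ỹ = Σ_{j=1}^n x_j and μ = E[ỹ]. Then E[ỹ²] ≤ 2·μ − Σ_{j=1}^n E[x_j²]. -/

import Mathlib

open MeasureTheory Finset

lemma sq_sum_aux (n : ℕ) (a : Fin n → ℝ) :
    (∑ j, a j) ^ 2 = ∑ j, (a j) ^ 2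
      + 2 * ∑ j, a j * ∑ k ∈ Finset.univ.filter (fun k => j < k), a k := by
  have h1 : (∑ j, a j) ^ 2 = ∑ j, ∑ k, a j * a k := by
    rw [sq, Finset.sum_mul_sum]
  have hsplit : ∀ j : Fin n, ∑ k, a j * a k
      = (a j) ^ 2 + ∑ k ∈ Finset.univ.filter (fun k => k < j), a j * a k
        + ∑ k ∈ Finset.univ.filter (fun k => j < k), a j * a k := by
    intro j
    rw [← Finset.sum_filter_add_sum_filter_not Finset.univ (fun k => j < k)
      (fun k => a j * a k)]
    have hfe : Finset.univ.filter (fun k => ¬ j < k)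
        = insert j (Finset.univ.filter (fun k => k < j)) := by
      ext k
      simp only [Finset.mem_filter, Finset.mem_univ, true_and, Finset.mem_insert]
      omega
    rw [hfe, Finset.sum_insert (by simp)]
    ring
  have hswap : ∑ j, ∑ k ∈ Finset.univ.filter (fun k => k < j), a j * a k
      = ∑ j, ∑ k ∈ Finset.univ.filter (fun k => j < k), a j * a k := by
    rw [Finset.sum_comm' (t' := Finset.univ) (s' := fun k => Finset.univ.filter (fun j => k < j))]
    · exact Finset.sum_congr rfl fun k _ => Finset.sum_congr rfl fun j _ => mul_comm _ _
    · intro j k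
      simp [Finset.mem_filter]
  simp only [h1, hsplit]
  rw [Finset.sum_add_distrib, Finset.sum_add_distrib, hswap]
  have hms : ∀ j : Fin n, a j * ∑ k ∈ Finset.univ.filter (fun k => j < k), a k
      = ∑ k ∈ Finset.univ.filter (fun k => j < k), a j * a k :=
    fun j => Finset.mul_sum _ _ _
  simp only [hms]
  ring

/-- Lemma 4.2(2): for an adapted sequence `x_j` of `[0,1]`-valued random variables such that
almost surely `x_j + E[Σ_{k>j} x_k | F_j] ≤ 1`, letting `ỹ = Σ_j x_j` and `μ = E[ỹ]`,
one has `E[ỹ²] ≤ 2μ − Σ_j E[x_j²]`. -/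
theorem fully_correlated_second_moment
    {Ω : Type*} {m0 : MeasurableSpace Ω} (P : Measure Ω) [IsProbabilityMeasure P]
    (n : ℕ) (ℱ : Fin n → MeasurableSpace Ω)
    (hmono : Monotone ℱ) (hle : ∀ j, ℱ j ≤ m0)
    (x : Fin n → Ω → ℝ)
    (hmeas : ∀ j, Measurable[ℱ j] (x j))
    (h0 : ∀ j ω, 0 ≤ x j ω) (h1 : ∀ j ω, x j ω ≤ 1)
    (hcond : ∀ j, ∀ᵐ ω ∂P,
      x j ω + (P[fun ω' => ∑ k ∈ Finset.univ.filter (fun k => j < k), x k ω' | ℱ j]) ω ≤ 1)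
    (μ : ℝ) (hμ : μ = ∫ ω, (∑ j, x j ω) ∂P) :
    ∫ ω, (∑ j, x j ω) ^ 2 ∂P ≤ 2 * μ - ∑ j, ∫ ω, (x j ω) ^ 2 ∂P := by
  -- basic measurability / integrability
  have hxm : ∀ j, Measurable (x j) := fun j => (hmeas j).mono (hle j) le_rfl
  have hxint : ∀ j, Integrable (x j) P := by
    intro j
    refine Integrable.mono' (integrable_const 1) (hxm j).aestronglyMeasurable ?_
    filter_upwards with ω
    rw [Real.norm_eq_abs, abs_of_nonneg (h0 j ω)]
    exact h1 j ω
  set S : Fin n → Ω → ℝ := fun j ω => ∑ k ∈ Finset.univ.filter (fun k => j < k), x k ω with hS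
  have hSint : ∀ j, Integrable (S j) P := fun j => integrable_finset_sum _ (fun k _ => hxint k)
  have hxSint : ∀ j, Integrable (fun ω => x j ω * S j ω) P := by
    intro j
    refine (hSint j).bdd_mul (hxm j).aestronglyMeasurable (c := 1) (Filter.Eventually.of_forall fun ω => ?_)
    rw [Real.norm_eq_abs, abs_of_nonneg (h0 j ω)]; exact h1 j ω
  have hx2int : ∀ j, Integrable (fun ω => (x j ω) ^ 2) P := by
    intro j
    have := (hxint j).bdd_mul (hxm j).aestronglyMeasurable
      (c := 1) (Filter.Eventually.of_forall fun ω => by rw [Real.norm_eq_abs, abs_of_nonneg (h0 j ω)]; exact h1 j ω)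
    simpa [sq] using this
  -- key bound
  have key : ∀ j, ∫ ω, x j ω * S j ω ∂P ≤ ∫ ω, x j ω ∂P - ∫ ω, (x j ω) ^ 2 ∂P := by
    intro j
    have hpull : P[fun ω => x j ω * S j ω | ℱ j] =ᵐ[P] fun ω => x j ω * (P[S j | ℱ j]) ω := by
      have := condExp_mul_of_stronglyMeasurable_left (μ := P) (m := ℱ j)
        (hmeas j).stronglyMeasurable (hxSint j) (hSint j)
      exact this
    have h1' : ∫ ω, x j ω * S j ω ∂P = ∫ ω, x j ω * (P[S j | ℱ j]) ω ∂P := by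
      rw [← integral_condExp (hle j) (f := fun ω => x j ω * S j ω)]
      exact integral_congr_ae hpull
    rw [h1']
    have hbd : ∀ᵐ ω ∂P, x j ω * (P[S j | ℱ j]) ω ≤ x j ω * (1 - x j ω) := by
      filter_upwards [hcond j] with ω hω
      exact mul_le_mul_of_nonneg_left (by linarith) (h0 j ω)
    have hlint : Integrable (fun ω => x j ω * (P[S j | ℱ j]) ω) P := by
      refine integrable_condExp.bdd_mul (hxm j).aestronglyMeasurable (c := 1) (Filter.Eventually.of_forall fun ω => ?_)
      rw [Real.norm_eq_abs, abs_of_nonneg (h0 j ω)]; exact h1 j ω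
    have hrint : Integrable (fun ω => x j ω * (1 - x j ω)) P := by
      have : (fun ω => x j ω * (1 - x j ω)) = fun ω => x j ω - (x j ω) ^ 2 := by
        ext ω; ring
      rw [this]
      exact (hxint j).sub (hx2int j)
    calc ∫ ω, x j ω * (P[S j | ℱ j]) ω ∂P ≤ ∫ ω, x j ω * (1 - x j ω) ∂P :=
          integral_mono_ae hlint hrint hbd
      _ = ∫ ω, (x j ω - (x j ω) ^ 2) ∂P := by
          apply integral_congr_ae; filter_upwards with ω; ring
      _ = ∫ ω, x j ω ∂P - ∫ ω, (x j ω) ^ 2 ∂P := integral_sub (hxint j) (hx2int j)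
  -- assemble
  have hexp : ∫ ω, (∑ j, x j ω) ^ 2 ∂P
      = ∑ j, ∫ ω, (x j ω) ^ 2 ∂P + 2 * ∑ j, ∫ ω, x j ω * S j ω ∂P := by
    have : ∀ ω, (∑ j, x j ω) ^ 2
        = ∑ j, (x j ω) ^ 2 + 2 * ∑ j, x j ω * S j ω := fun ω => sq_sum_aux n (fun j => x j ω)
    rw [integral_congr_ae (Filter.Eventually.of_forall this)]
    rw [integral_add (integrable_finset_sum _ fun j _ => hx2int j)
      ((integrable_finset_sum _ fun j _ => hxSint j).const_mul 2)]
    rw [integral_finset_sum _ (fun j _ => hx2int j), integral_const_mul,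
      integral_finset_sum _ (fun j _ => hxSint j)]
  have hμ' : μ = ∑ j, ∫ ω, x j ω ∂P := by
    rw [hμ, integral_finset_sum _ (fun j _ => hxint j)]
  rw [hexp, hμ']
  have hsum : ∑ j, ∫ ω, x j ω * S j ω ∂P
      ≤ ∑ j, (∫ ω, x j ω ∂P - ∫ ω, (x j ω) ^ 2 ∂P) :=
    Finset.sum_le_sum fun j _ => key j
  rw [Finset.sum_sub_distrib] at hsum
  linarith
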